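/- With E^{(k)} = I + T^{(k)} and H^{(k)} = E^{(1)}⋯E^{(k)} as above, trace(H^{(k)}) = −3^k + 2k + N + 1 for 1 ≤ k ≤ N. In particular trace(H^{(N)}) = −3^N + 3N + 1. -/
import Mathlib

open Matrix BigOperators

def Emat (N : ℕ) (k : ℕ) : Matrix (Fin N) (Fin N) ℝ :=
  fun i j => (if i = j then 1 else 0) +
    (if (i : ℕ) = k then
       (if (j : ℕ) < k then 2 * (-1 : ℝ) ^ (k - (j : ℕ) + 1)
        else if k < (j : ℕ) then 2 * (-1 : ℝ) ^ ((j : ℕ) - k)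
        else 0)
     else 0)

noncomputable def Hmat (N k : ℕ) : Matrix (Fin N) (Fin N) ℝ :=
  ((List.range k).map (Emat N)).prod

def tval (k j : ℕ) : ℝ :=
  if j < k then 2 * (-1 : ℝ) ^ (k - j + 1)
  else if k < j then 2 * (-1 : ℝ) ^ (j - k) else 0

def Tk (N k : ℕ) : Matrix (Fin N) (Fin N) ℝ :=
  fun i j => if (i : ℕ) = k then tval k (j : ℕ) else 0

lemma Emat_eq (N k : ℕ) : Emat N k = 1 + Tk N k := by
  funext i j
  simp [Emat, Tk, tval, Matrix.add_apply, Matrix.one_apply]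

lemma Hmat_succ (N k : ℕ) : Hmat N (k + 1) = Hmat N k * Emat N k := by
  simp [Hmat, List.range_succ]

lemma mul_Tk_apply (N k : ℕ) (hk : k < N) (A : Matrix (Fin N) (Fin N) ℝ) (i j : Fin N) :
    (A * Tk N k) i j = A i ⟨k, hk⟩ * tval k (j : ℕ) := by
  rw [Matrix.mul_apply]
  rw [Finset.sum_eq_single (⟨k, hk⟩ : Fin N)]
  · simp [Tk]
  · intro l _ hl
    have h : (l : ℕ) ≠ k := fun h => hl (Fin.ext h)
    simp [Tk, h]
  · simp

lemma key (N : ℕ) : ∀ k, k ≤ N →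
    (∀ i j : Fin N, k ≤ (j : ℕ) →
      Hmat N k i j = if (i : ℕ) < k then
          2 * 3 ^ (k - (i : ℕ) - 1) * (-1 : ℝ) ^ ((i : ℕ) + (j : ℕ))
        else if i = j then 1 else 0)
    ∧ Matrix.trace (Hmat N k) = -(3 : ℝ) ^ k + 2 * k + N + 1 := by
  intro k
  induction k with
  | zero =>
    intro _
    have h0 : Hmat N 0 = 1 := by simp [Hmat]
    constructor
    · intro i j _
      simp [h0, Matrix.one_apply]
    · simp [h0, Matrix.trace_one]
  | succ k ih =>
    intro hk1
    have hk : k < N := by omega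
    obtain ⟨hcol, htr⟩ := ih (by omega)
    have hH : Hmat N (k + 1) = Hmat N k + Hmat N k * Tk N k := by
      rw [Hmat_succ, Emat_eq, mul_add, mul_one]
    constructor
    · intro i j hj
      rw [hH, Matrix.add_apply, mul_Tk_apply N k hk]
      have hAij := hcol i j (by omega)
      have hAik := hcol i ⟨k, hk⟩ (le_refl k)
      have htv : tval k (j : ℕ) = 2 * (-1 : ℝ) ^ ((j : ℕ) - k) := by
        simp [tval, show ¬ ((j : ℕ) < k) by omega, show k < (j : ℕ) by omega]
      rw [hAij, hAik, htv]
      by_cases hik : (i : ℕ) < k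
      · rw [if_pos hik, if_pos hik, if_pos (show (i : ℕ) < k + 1 by omega)]
        have h1 : (-1 : ℝ) ^ ((i : ℕ) + k) * (-1 : ℝ) ^ ((j : ℕ) - k)
            = (-1 : ℝ) ^ ((i : ℕ) + (j : ℕ)) := by
          rw [← pow_add]; congr 1; omega
        have h2 : (3 : ℝ) ^ (k + 1 - (i : ℕ) - 1) = 3 ^ (k - (i : ℕ) - 1) * 3 := by
          rw [← pow_succ]; congr 1; omega
        rw [h2]
        linear_combination 4 * (3 : ℝ) ^ (k - (i : ℕ) - 1) * h1
      · by_cases hik2 : (i : ℕ) = k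
        · have hij : i ≠ j := by intro h; rw [h] at hik2; omega
          have hieq : i = (⟨k, hk⟩ : Fin N) := Fin.ext hik2
          rw [if_neg hik, if_neg hij, if_pos hieq, if_neg hik,
            if_pos (show (i : ℕ) < k + 1 by omega)]
          have h1 : (-1 : ℝ) ^ ((i : ℕ) + (j : ℕ)) = (-1 : ℝ) ^ (((j : ℕ) - k) + 2 * k) := by
            congr 1; omega
          have h2 : k + 1 - (i : ℕ) - 1 = 0 := by omega
          rw [h1, h2, pow_add, pow_mul]
          norm_num
        · have hineq : i ≠ (⟨k, hk⟩ : Fin N) := by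
            intro h; exact hik2 (by rw [h])
          rw [if_neg hik, if_neg hik, if_neg hineq,
            if_neg (show ¬ ((i : ℕ) < k + 1) by omega)]
          ring
    · rw [hH, Matrix.trace_add]
      have hterm : ∀ i : Fin N, (Hmat N k * Tk N k) i i
          = if (i : ℕ) < k then (-4) * (3 : ℝ) ^ (k - 1 - (i : ℕ)) else 0 := by
        intro i
        rw [mul_Tk_apply N k hk, hcol i ⟨k, hk⟩ (le_refl k)]
        by_cases h1 : (i : ℕ) < k
        · rw [if_pos h1, if_pos h1]
          have htv : tval k (i : ℕ) = 2 * (-1 : ℝ) ^ (k - (i : ℕ) + 1) := by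
            simp [tval, h1]
          rw [htv]
          have hp : (-1 : ℝ) ^ ((i : ℕ) + k) * (-1 : ℝ) ^ (k - (i : ℕ) + 1) = -1 := by
            rw [← pow_add, show (i : ℕ) + k + (k - (i : ℕ) + 1) = 2 * k + 1 by omega,
              pow_succ, pow_mul]
            norm_num
          have he : (3 : ℝ) ^ (k - 1 - (i : ℕ)) = 3 ^ (k - (i : ℕ) - 1) := by
            congr 1; omega
          rw [he]
          linear_combination 4 * (3 : ℝ) ^ (k - (i : ℕ) - 1) * hp
        · rw [if_neg h1, if_neg h1]
          by_cases h2 : (i : ℕ) = k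
          · have : tval k (i : ℕ) = 0 := by simp [tval, h2]
            rw [this, mul_zero]
          · have hineq : i ≠ (⟨k, hk⟩ : Fin N) := by
              intro h; exact h2 (by rw [h])
            rw [if_neg hineq, zero_mul]
      have hsum : Matrix.trace (Hmat N k * Tk N k) = -2 * (3 : ℝ) ^ k + 2 := by
        rw [Matrix.trace]
        simp only [Matrix.diag]
        rw [Finset.sum_congr rfl (fun i _ => hterm i)]
        rw [Fin.sum_univ_eq_sum_range
          (fun n => if n < k then (-4) * (3 : ℝ) ^ (k - 1 - n) else 0) N]
        rw [← Finset.sum_subset (Finset.range_subset_range.2 (show k ≤ N by omega))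
          (by intro x _ hx; rw [if_neg (by simp at hx ⊢; omega)])]
        rw [Finset.sum_congr rfl
          (fun x hx => if_pos (Finset.mem_range.1 hx))]
        rw [← Finset.mul_sum,
          Finset.sum_range_reflect (fun n => (3 : ℝ) ^ n) k,
          geom_sum_eq (by norm_num : (3:ℝ) ≠ 1) k]
        ring
      rw [htr, hsum]
      push_cast
      ring

theorem stmt_16 (N k : ℕ) (hk1 : 1 ≤ k) (hkN : k ≤ N) :
    Matrix.trace (Hmat N k) = -(3 : ℝ) ^ k + 2 * k + N + 1 ∧
    Matrix.trace (Hmat N N) = -(3 : ℝ) ^ N + 3 * N + 1 := by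
  refine ⟨(key N k hkN).2, ?_⟩
  rw [(key N N (le_refl N)).2]
  ring
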